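/- Let L be a finite lattice that is not meet-semidistributive (in the sense that some set {z : z ∧ y = x}, for x ≤ y, lacks a maximum). Then there exists a join-irreducible element j of L such that the set {z ∈ L : z ∧ j = j_*} has at least two distinct maximal elements, and both of these maximal elements are meet-irreducible. -/

import Mathlib

/-- A finite lattice is meet-semidistributive if for all `x ≤ y` the set
`{z : z ⊓ y = x}` has a maximum element. -/
def MeetSemidistrib (L : Type*) [Lattice L] : Prop :=
  ∀ x y : L, x ≤ y → ∃ m : L, m ⊓ y = x ∧ ∀ z : L, z ⊓ y = x → z ≤ m

theorem Finset.exists_maximal_old {α : Type*} [Preorder α] (s : Finset α) (h : s.Nonempty) :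
    ∃ m ∈ s, ∀ x ∈ s, ¬m < x := by
  obtain ⟨w, hw⟩ := Finset.exists_maximal h
  exact ⟨w, hw.1, fun x hx hlt => hlt.not_ge (hw.2 hx hlt.le)⟩

theorem Finset.exists_minimal_old {α : Type*} [Preorder α] (s : Finset α) (h : s.Nonempty) :
    ∃ m ∈ s, ∀ x ∈ s, ¬x < m := by
  obtain ⟨w, hw⟩ := Finset.exists_minimal h
  exact ⟨w, hw.1, fun x hx hlt => hlt.not_ge (hw.2 hx hlt.le)⟩

section Aux

variable {L : Type*} [Lattice L] [Fintype L]

open Finset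

/-- In a finite lattice, any `a < j` lies below some lower cover of `j`. -/
lemma aux_exists_covby_between {a j : L} (h : a < j) : ∃ w, a ≤ w ∧ w ⋖ j := by
  classical
  obtain ⟨w, hw, hmax⟩ := Finset.exists_maximal_old
    (Finset.univ.filter (fun c => a ≤ c ∧ c < j)) ⟨a, by simp [h]⟩
  simp only [Finset.mem_filter, Finset.mem_univ, true_and] at hw hmax
  exact ⟨w, hw.1, hw.2, fun c hc1 hc2 => hmax c ⟨hw.1.trans hc1.le, hc2⟩ hc1⟩

/-- In a finite lattice, any non-maximal element has an upper cover. -/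
lemma aux_exists_covby_above {m u : L} (h : m < u) : ∃ w, m ⋖ w := by
  classical
  obtain ⟨w, hw, hmin⟩ := Finset.exists_minimal_old
    (Finset.univ.filter (fun c => m < c)) ⟨u, by simp [h]⟩
  simp only [Finset.mem_filter, Finset.mem_univ, true_and] at hw hmin
  exact ⟨w, hw, fun c hc1 hc2 => hmin c hc1 hc2⟩

/-- If `κ(j)` exists for every join-irreducible `j`, then the lattice is
meet-semidistributive. -/
lemma aux_H_implies_MSD
    (H : ∀ j jstar : L, jstar ⋖ j → (∀ w : L, w ⋖ j → w = jstar) →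
      ∃ k : L, k ⊓ j = jstar ∧ ∀ z : L, z ⊓ j = jstar → z ≤ k) :
    MeetSemidistrib L := by
  classical
  intro x y hxy
  obtain ⟨m, hm, hmax⟩ := Finset.exists_maximal_old
    (Finset.univ.filter (fun z => z ⊓ y = x)) ⟨x, by simp [inf_eq_left.2 hxy]⟩
  simp only [Finset.mem_filter, Finset.mem_univ, true_and] at hm hmax
  refine ⟨m, hm, fun z hz => ?_⟩
  -- consider t = (z ⊔ m) ⊓ y
  set t : L := (z ⊔ m) ⊓ y with ht
  have hxz : x ≤ z := hz ▸ inf_le_left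
  have hxm : x ≤ m := hm ▸ inf_le_left
  have hxt : x ≤ t := le_inf (hxz.trans le_sup_left) hxy
  by_cases htx : t = x
  · -- then z ⊔ m is in the set, so equals m by maximality
    rw [ht] at htx
    have hmem : ¬ m < z ⊔ m := hmax (z ⊔ m) htx
    have h2 : z ⊔ m = m :=
      ((eq_or_lt_of_le (le_sup_right : m ≤ z ⊔ m)).resolve_right hmem).symm
    exact le_sup_left.trans h2.le
  · have hxlt : x < t := lt_of_le_of_ne hxt (Ne.symm htx)
    -- pick a minimal j ≤ t with j ≰ x
    obtain ⟨j, hj, hjmin⟩ := Finset.exists_minimal_old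
      (Finset.univ.filter (fun a => a ≤ t ∧ ¬ a ≤ x))
      ⟨t, Finset.mem_filter.2 ⟨Finset.mem_univ _, le_refl t,
        fun h => htx (le_antisymm h hxt)⟩⟩
    simp only [Finset.mem_filter, Finset.mem_univ, true_and] at hj hjmin
    obtain ⟨hjt, hjx⟩ := hj
    have hlow : ∀ a : L, a < j → a ≤ x := by
      intro a ha
      by_contra hax
      exact hjmin a ⟨ha.le.trans hjt, hax⟩ ha
    set jstar : L := x ⊓ j with hjstar
    have hjsj : jstar < j :=
      lt_of_le_of_ne inf_le_right (fun h => hjx (h ▸ inf_le_left))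
    have hcov : jstar ⋖ j :=
      ⟨hjsj, fun c hc1 hc2 => absurd (le_inf (hlow c hc2) hc2.le) hc1.not_ge⟩
    have huniq : ∀ w : L, w ⋖ j → w = jstar := by
      intro w hw
      have hwx : w ≤ jstar := le_inf (hlow w hw.1) hw.1.le
      rcases eq_or_lt_of_le hwx with h | h
      · exact h
      · exact absurd hjsj (hw.2 h)
    obtain ⟨k, hk1, hk2⟩ := H j jstar hcov huniq
    have hjy : j ≤ y := hjt.trans inf_le_right
    have hzj : z ⊓ j = jstar := by
      have : z ⊓ j = (z ⊓ y) ⊓ j := by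
        rw [inf_assoc, inf_eq_right.2 hjy]
      rw [this, hz]
    have hmj : m ⊓ j = jstar := by
      have : m ⊓ j = (m ⊓ y) ⊓ j := by
        rw [inf_assoc, inf_eq_right.2 hjy]
      rw [this, hm]
    have hjk : j ≤ k := by
      have h1 : z ⊔ m ≤ k := sup_le (hk2 z hzj) (hk2 m hmj)
      exact (hjt.trans inf_le_left).trans h1
    have : k ⊓ j = j := inf_eq_right.2 hjk
    rw [hk1] at this
    exact absurd this (ne_of_lt hjsj)

/-- A maximal element of `{z : z ⊓ j = jstar}` is meet-irreducible. -/
lemma aux_maximal_mi {j jstar m : L} (hcov : jstar ⋖ j)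
    (huniq : ∀ w : L, w ⋖ j → w = jstar)
    (hm : m ⊓ j = jstar) (hmax : ∀ z : L, z ⊓ j = jstar → m ≤ z → z = m) :
    ∃! w : L, m ⋖ w := by
  have hjm : ¬ j ≤ m := by
    intro h
    have : m ⊓ j = j := inf_eq_right.2 h
    rw [hm] at this
    exact hcov.ne this
  have hmlt : m < m ⊔ j :=
    lt_of_le_of_ne le_sup_left (fun h => hjm (le_sup_right.trans h.symm.le))
  obtain ⟨u, hu⟩ := aux_exists_covby_above hmlt
  have key : ∀ v : L, m ⋖ v → j ≤ v := by
    intro v hv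
    have h1 : jstar ≤ v ⊓ j := le_inf ((hm ▸ inf_le_left : jstar ≤ m).trans hv.1.le) hcov.le
    rcases eq_or_lt_of_le (inf_le_right : v ⊓ j ≤ j) with h | h
    · exact inf_eq_right.1 h
    · obtain ⟨w, hw1, hw2⟩ := aux_exists_covby_between h
      have hwjs : w = jstar := huniq w hw2
      have : v ⊓ j = jstar := le_antisymm (hwjs ▸ hw1) h1
      have := hmax v this hv.1.le
      exact absurd this.symm hv.1.ne
  refine ⟨u, hu, fun v hv => ?_⟩
  have hj1 : j ≤ u := key u hu
  have hj2 : j ≤ v := key v hv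
  have hmne : m < v ⊓ u := by
    rcases eq_or_lt_of_le (le_inf hv.1.le hu.1.le : m ≤ v ⊓ u) with h | h
    · exact absurd (le_inf hj2 hj1) (h ▸ hjm)
    · exact h
  have hvu : v ⊓ u = u := by
    rcases eq_or_lt_of_le (inf_le_right : v ⊓ u ≤ u) with h | h
    · exact h
    · exact absurd h (hu.2 hmne)
  have huv : u ≤ v := hvu ▸ inf_le_left
  rcases eq_or_lt_of_le huv with h | h
  · exact h.symm
  · exact absurd h (hv.2 hu.1)

end Aux

/-- If a finite lattice is not meet-semidistributive, then there is a
join-irreducible `j` (with unique lower cover `jstar`) such that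
`{z : z ⊓ j = jstar}` has two distinct maximal elements, and each such maximal
element is meet-irreducible. -/
theorem stmt18 {L : Type*} [Lattice L] [Fintype L]
    (hL : ¬ MeetSemidistrib L) :
    ∃ j jstar m m' : L,
      jstar ⋖ j ∧ (∀ w : L, w ⋖ j → w = jstar) ∧
      m ≠ m' ∧
      m ⊓ j = jstar ∧ m' ⊓ j = jstar ∧
      (∀ z : L, z ⊓ j = jstar → m ≤ z → z = m) ∧
      (∀ z : L, z ⊓ j = jstar → m' ≤ z → z = m') ∧
      (∃! w : L, m ⋖ w) ∧ (∃! w : L, m' ⋖ w) := by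
  classical
  have hH : ¬ ∀ j jstar : L, jstar ⋖ j → (∀ w : L, w ⋖ j → w = jstar) →
      ∃ k : L, k ⊓ j = jstar ∧ ∀ z : L, z ⊓ j = jstar → z ≤ k :=
    fun h => hL (aux_H_implies_MSD h)
  push_neg at hH
  obtain ⟨j, jstar, hcov, huniq, hnomax⟩ := hH
  -- the set S = {z : z ⊓ j = jstar}
  obtain ⟨m, hmS, hmmax⟩ := Finset.exists_maximal_old
    (Finset.univ.filter (fun z : L => z ⊓ j = jstar))
    ⟨jstar, by simp [inf_eq_left.2 hcov.le]⟩
  simp only [Finset.mem_filter, Finset.mem_univ, true_and] at hmS hmmax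
  have hmmax' : ∀ z : L, z ⊓ j = jstar → m ≤ z → z = m := by
    intro z hz hmz
    rcases eq_or_lt_of_le hmz with h | h
    · exact h.symm
    · exact absurd h (hmmax z hz)
  -- since S has no maximum, there is z in S with z ≰ m
  obtain ⟨z, hz, hzm⟩ := hnomax m hmS
  -- take a maximal element of S above z
  obtain ⟨m', hm'S, hm'max⟩ := Finset.exists_maximal_old
    (Finset.univ.filter (fun w : L => w ⊓ j = jstar ∧ z ≤ w))
    ⟨z, by simp [hz]⟩
  simp only [Finset.mem_filter, Finset.mem_univ, true_and] at hm'S hm'max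
  have hm'max' : ∀ w : L, w ⊓ j = jstar → m' ≤ w → w = m' := by
    intro w hw hm'w
    rcases eq_or_lt_of_le hm'w with h | h
    · exact h.symm
    · exact absurd h (hm'max w ⟨hw, hm'S.2.trans hm'w⟩)
  have hne : m ≠ m' := by
    intro h
    exact hzm (h ▸ hm'S.2)
  exact ⟨j, jstar, m, m', hcov, huniq, hne, hmS, hm'S.1, hmmax', hm'max',
    aux_maximal_mi hcov huniq hmS hmmax', aux_maximal_mi hcov huniq hm'S.1 hm'max'⟩
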